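/- Fix positive integers n and N, a real p with 0 < p < 1, and x : Fin n → Bool. Let e₁, …, e_N be N independent erasure patterns of length n with parameter p. Then the probability that there exists x̃ : Fin n → Bool with x̃ ≠ x such that for every j ∈ {1,…,N} and every index i with x i ≠ x̃ i one has e_j i = true, is at most (1 + p^N)^n - 1. -/

import Mathlib

open MeasureTheory

/-- The Bernoulli measure on `Bool` giving probability `p` to `true` (an erased position). -/
noncomputable def bernoulliMeasure (p : ℝ) : Measure Bool :=
  ENNReal.ofReal p • Measure.dirac true + ENNReal.ofReal (1 - p) • Measure.dirac false

/-- An erasure pattern of length `n` with parameter `p`: the coordinates are independent,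
each erased (`= true`) with probability `p`. -/
noncomputable def erasureMeasure (n : ℕ) (p : ℝ) : Measure (Fin n → Bool) :=
  Measure.pi fun _ : Fin n => bernoulliMeasure p

instance (p : ℝ) : IsFiniteMeasure (bernoulliMeasure p) where
  measure_univ_lt_top := by
    simp only [bernoulliMeasure, Measure.add_apply, Measure.smul_apply, smul_eq_mul,
      measure_univ, mul_one]
    exact ENNReal.add_lt_top.mpr ⟨ENNReal.ofReal_lt_top, ENNReal.ofReal_lt_top⟩

lemma bern_true (p : ℝ) : bernoulliMeasure p {true} = ENNReal.ofReal p := by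
  simp [bernoulliMeasure, Measure.dirac_apply]

lemma bern_univ (p : ℝ) (hp0 : 0 ≤ p) (hp1 : p ≤ 1) :
    bernoulliMeasure p Set.univ = 1 := by
  simp only [bernoulliMeasure, Measure.add_apply, Measure.smul_apply, smul_eq_mul,
    measure_univ, mul_one]
  rw [← ENNReal.ofReal_add hp0 (by linarith)]
  norm_num

instance (n : ℕ) (p : ℝ) : IsFiniteMeasure (erasureMeasure n p) := by
  unfold erasureMeasure; infer_instance

/-- For `x : Fin n → Bool` and `N` independent erasure patterns
`e 0, …, e (N-1)` with parameter `p`, the probability that some `x̃ ≠ x` is compatible with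
all `N` patterns (every index where `x` and `x̃` differ is erased in every pattern) is at
most `(1 + p^N)^n - 1`. -/
theorem stmt_9 (n N : ℕ) (hn : 0 < n) (hN : 0 < N) (p : ℝ) (hp0 : 0 < p) (hp1 : p < 1)
    (x : Fin n → Bool) :
    (Measure.pi fun _ : Fin N => erasureMeasure n p)
      {e : Fin N → Fin n → Bool | ∃ x' : Fin n → Bool, x' ≠ x ∧
        ∀ j : Fin N, ∀ i : Fin n, x i ≠ x' i → e j i = true}
      ≤ ENNReal.ofReal ((1 + p ^ N) ^ n - 1) := by
  classical
  set q : ENNReal := ENNReal.ofReal p with hq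
  set μ : Measure (Fin N → Fin n → Bool) := Measure.pi fun _ : Fin N => erasureMeasure n p
    with hμ
  set A : (Fin n → Bool) → Set (Fin N → Fin n → Bool) := fun x' =>
    Set.pi Set.univ (fun _ : Fin N =>
      Set.pi Set.univ (fun i : Fin n => if x i ≠ x' i then ({true} : Set Bool) else Set.univ))
    with hA
  -- union bound
  have hsub : {e : Fin N → Fin n → Bool | ∃ x' : Fin n → Bool, x' ≠ x ∧
      ∀ j : Fin N, ∀ i : Fin n, x i ≠ x' i → e j i = true}
      ⊆ ⋃ x' ∈ Finset.univ.erase x, A x' := by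
    rintro e ⟨x', hne, h⟩
    refine Set.mem_biUnion (Finset.mem_erase.mpr ⟨hne, Finset.mem_univ _⟩) ?_
    intro j _
    intro i _
    by_cases hd : x i ≠ x' i
    · simp [hd, h j i hd]
    · simp [hd]
  -- value of each A x'
  have hAval : ∀ x' : Fin n → Bool,
      μ (A x') = ∏ i : Fin n, (if x i ≠ x' i then q ^ N else 1) := by
    intro x'
    have h1 : erasureMeasure n p
        (Set.pi Set.univ (fun i : Fin n => if x i ≠ x' i then ({true} : Set Bool) else Set.univ))
        = ∏ i : Fin n, (if x i ≠ x' i then q else 1) := by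
      rw [erasureMeasure, Measure.pi_pi]
      refine Finset.prod_congr rfl fun i _ => ?_
      by_cases hd : x i ≠ x' i
      · simp [hd, bern_true, hq]
      · rw [if_neg hd, if_neg hd]
        exact bern_univ p hp0.le hp1.le
    rw [hμ, hA]
    rw [Measure.pi_pi, Finset.prod_const, h1, Finset.card_univ, Fintype.card_fin,
      ← Finset.prod_pow]
    refine Finset.prod_congr rfl fun i _ => ?_
    by_cases hd : x i ≠ x' i <;> simp [hd]
  have hunion : μ {e : Fin N → Fin n → Bool | ∃ x' : Fin n → Bool, x' ≠ x ∧
      ∀ j : Fin N, ∀ i : Fin n, x i ≠ x' i → e j i = true}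
      ≤ ∑ x' ∈ Finset.univ.erase x, μ (A x') :=
    (measure_mono hsub).trans (measure_biUnion_finset_le (Finset.univ.erase x) A)
  -- compute the sum
  have hsumuniv : ∑ x' : Fin n → Bool, ∏ i : Fin n, (if x i ≠ x' i then q ^ N else 1)
      = (1 + q ^ N) ^ n := by
    have key := Fintype.prod_sum (fun (i : Fin n) (b : Bool) =>
      if x i ≠ b then q ^ N else (1 : ENNReal))
    rw [← key]
    have hs : ∀ i : Fin n, (∑ b : Bool, if x i ≠ b then q ^ N else (1:ENNReal)) = 1 + q ^ N := by
      intro i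
      rcases Bool.eq_false_or_eq_true (x i) with h | h <;>
        simp [Fintype.sum_bool, h, add_comm]
    simp only [hs, Finset.prod_const, Finset.card_univ, Fintype.card_fin]
  have hx1 : ∏ i : Fin n, (if x i ≠ x i then q ^ N else (1:ENNReal)) = 1 := by
    simp
  have hsplit : (1:ENNReal) + ∑ x' ∈ Finset.univ.erase x,
      ∏ i : Fin n, (if x i ≠ x' i then q ^ N else 1) = (1 + q ^ N) ^ n := by
    rw [← hsumuniv, ← Finset.add_sum_erase Finset.univ
      (fun x' => ∏ i : Fin n, (if x i ≠ x' i then q ^ N else 1)) (Finset.mem_univ x), hx1]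
  -- rewrite the RHS
  have hone : (1:ℝ) ≤ (1 + p ^ N) ^ n := one_le_pow₀ (by nlinarith [pow_pos hp0 N])
  have hrhs : ENNReal.ofReal ((1 + p ^ N) ^ n - 1) + 1 = (1 + q ^ N) ^ n := by
    rw [show (1:ENNReal) = ENNReal.ofReal 1 by simp,
      ← ENNReal.ofReal_add (by linarith) zero_le_one]
    rw [sub_add_cancel, ENNReal.ofReal_pow (by positivity), ENNReal.ofReal_add zero_le_one
      (by positivity), ENNReal.ofReal_one, hq, ENNReal.ofReal_pow hp0.le]
  -- combine
  refine le_trans hunion ?_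
  have hsum_le : ∑ x' ∈ Finset.univ.erase x, μ (A x')
      = ∑ x' ∈ Finset.univ.erase x, ∏ i : Fin n, (if x i ≠ x' i then q ^ N else 1) :=
    Finset.sum_congr rfl fun x' _ => hAval x'
  rw [hsum_le]
  have hfin : (1:ENNReal) + ∑ x' ∈ Finset.univ.erase x,
      ∏ i : Fin n, (if x i ≠ x' i then q ^ N else 1)
      = 1 + ENNReal.ofReal ((1 + p ^ N) ^ n - 1) := by
    rw [hsplit, ← hrhs, add_comm]
  exact le_of_eq ((ENNReal.add_right_inj ENNReal.one_ne_top).mp hfin)
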